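/- Let h₁, h₂ : [0,1] → [0,1] be twice continuously differentiable, strictly increasing, onto, with h₁(0)=h₂(0)=0 and h₁(1)=h₂(1)=1. Then -h₂''(p)/h₂'(p) ≥ -h₁''(p)/h₁'(p) for all p ∈ (0,1) if and only if h₂ ∘ h₁⁻¹ is concave on (0,1). -/

import Mathlib

open Set

/-- If `F` is antitone on an open interval and has a derivative at an interior point,
then that derivative is nonpositive. -/
lemma aux_antitoneOn_deriv_nonpos {F : ℝ → ℝ} {a b p F' : ℝ} (hp : p ∈ Ioo a b)
    (hF : HasDerivAt F F' p) (hA : AntitoneOn F (Ioo a b)) : F' ≤ 0 := by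
  have hpb : p < b := hp.2
  have h1 : HasDerivWithinAt F F' (Ioo p b) p := hF.hasDerivWithinAt
  have h2 : Filter.Tendsto (slope F p) (nhdsWithin p (Ioo p b \ {p})) (nhds F') :=
    hasDerivWithinAt_iff_tendsto_slope.mp h1
  have hdiff : Ioo p b \ {p} = Ioo p b := by
    apply diff_singleton_eq_self
    simp
  rw [hdiff] at h2
  have hne : (nhdsWithin p (Ioo p b)).NeBot := by
    apply mem_closure_iff_nhdsWithin_neBot.mp
    rw [closure_Ioo (ne_of_lt hpb)]
    exact ⟨le_refl p, le_of_lt hpb⟩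
  refine le_of_tendsto h2 ?_
  filter_upwards [self_mem_nhdsWithin] with y hy
  have hyI : y ∈ Ioo a b := ⟨lt_trans hp.1 hy.1, hy.2⟩
  have hFy : F y ≤ F p := hA hp hyI (le_of_lt hy.1)
  rw [slope_def_field]
  have : (F y - F p) / (y - p) ≤ 0 :=
    div_nonpos_of_nonpos_of_nonneg (by linarith) (by linarith [hy.1])
  simpa [div_eq_inv_mul] using this

/-- The dual local index of absolute risk aversion -h''/h' dominates pointwise
iff h₂ ∘ h₁⁻¹ is concave. -/
theorem dt_index_iff_concave_transform
    (h₁ h₂ g : ℝ → ℝ)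
    (hC1 : ContDiff ℝ 2 h₁) (hC2 : ContDiff ℝ 2 h₂)
    (hm1 : StrictMonoOn h₁ (Icc 0 1)) (hm2 : StrictMonoOn h₂ (Icc 0 1))
    (hs1 : SurjOn h₁ (Icc 0 1) (Icc 0 1)) (hs2 : SurjOn h₂ (Icc 0 1) (Icc 0 1))
    (hmap1 : MapsTo h₁ (Icc 0 1) (Icc 0 1)) (hmap2 : MapsTo h₂ (Icc 0 1) (Icc 0 1))
    (h10 : h₁ 0 = 0) (h11 : h₁ 1 = 1) (h20 : h₂ 0 = 0) (h21 : h₂ 1 = 1)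
    (hd1 : ∀ p ∈ Icc (0:ℝ) 1, 0 < deriv h₁ p)
    (hd2 : ∀ p ∈ Icc (0:ℝ) 1, 0 < deriv h₂ p)
    (hg : ∀ p ∈ Icc (0:ℝ) 1, g (h₁ p) = p) :
    (∀ p ∈ Ioo (0:ℝ) 1,
        -(deriv (deriv h₂) p) / deriv h₂ p ≥ -(deriv (deriv h₁) p) / deriv h₁ p) ↔
    ConcaveOn ℝ (Ioo 0 1) (h₂ ∘ g) := by
  -- Smoothness facts
  have e2 : (2 : WithTop ℕ∞) = 1 + 1 := by norm_num
  have hC1d : ContDiff ℝ 1 (deriv h₁) := (contDiff_succ_iff_deriv.mp (e2 ▸ hC1)).2.2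
  have hC2d : ContDiff ℝ 1 (deriv h₂) := (contDiff_succ_iff_deriv.mp (e2 ▸ hC2)).2.2
  have hdiff1 : Differentiable ℝ h₁ := hC1.differentiable (by norm_num)
  have hdiff2 : Differentiable ℝ h₂ := hC2.differentiable (by norm_num)
  have hdiff1' : Differentiable ℝ (deriv h₁) := hC1d.differentiable (by norm_num)
  have hdiff2' : Differentiable ℝ (deriv h₂) := hC2d.differentiable (by norm_num)
  have hcont1' : Continuous (deriv h₁) := hdiff1'.continuous
  have hcont2' : Continuous (deriv h₂) := hdiff2'.continuous
  -- Inverse function facts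
  have hginv : ∀ y ∈ Icc (0:ℝ) 1, g y ∈ Icc (0:ℝ) 1 ∧ h₁ (g y) = y := by
    intro y hy
    obtain ⟨p, hp, hpy⟩ := hs1 hy
    have hgy : g y = p := by rw [← hpy, hg p hp]
    rw [hgy]; exact ⟨hp, hpy⟩
  have h1Ioo : ∀ p ∈ Ioo (0:ℝ) 1, h₁ p ∈ Ioo (0:ℝ) 1 := by
    intro p hp
    constructor
    · have := hm1 (left_mem_Icc.mpr zero_le_one) (Ioo_subset_Icc_self hp) hp.1
      rwa [h10] at this
    · have := hm1 (Ioo_subset_Icc_self hp) (right_mem_Icc.mpr zero_le_one) hp.2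
      rwa [h11] at this
  have hgIoo : ∀ y ∈ Ioo (0:ℝ) 1, g y ∈ Ioo (0:ℝ) 1 := by
    intro y hy
    have hy' : y ∈ Icc (0:ℝ) 1 := Ioo_subset_Icc_self hy
    obtain ⟨hmem, hval⟩ := hginv y hy'
    constructor
    · rcases lt_or_eq_of_le hmem.1 with h | h
      · exact h
      · exfalso
        have : y = 0 := by rw [← hval, ← h, h10]
        exact absurd hy.1 (by rw [this]; exact lt_irrefl 0)
    · rcases lt_or_eq_of_le hmem.2 with h | h
      · exact h
      · exfalso
        have : y = 1 := by rw [← hval, h, h11]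
        exact absurd hy.2 (by rw [this]; exact lt_irrefl 1)
  have hgmono : StrictMonoOn g (Icc 0 1) := by
    intro a ha b hb hab
    obtain ⟨hga, hva⟩ := hginv a ha
    obtain ⟨hgb, hvb⟩ := hginv b hb
    by_contra hle
    push_neg at hle
    rcases lt_or_eq_of_le hle with h | h
    · have := hm1 hgb hga h
      rw [hva, hvb] at this
      linarith
    · have : b = a := by rw [← hvb, ← hva, h]
      linarith
  have hgcont : ∀ y ∈ Ioo (0:ℝ) 1, ContinuousAt g y := by
    intro y hy
    apply hgmono.continuousAt_of_image_mem_nhds (Icc_mem_nhds hy.1 hy.2)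
    apply Filter.mem_of_superset (Icc_mem_nhds (hgIoo y hy).1 (hgIoo y hy).2)
    intro z hz
    exact ⟨h₁ z, hmap1 hz, hg z hz⟩
  have hgderiv : ∀ y ∈ Ioo (0:ℝ) 1, HasDerivAt g (deriv h₁ (g y))⁻¹ y := by
    intro y hy
    have hgy := hgIoo y hy
    apply HasDerivAt.of_local_left_inverse (hgcont y hy) (hdiff1 (g y)).hasDerivAt
      (ne_of_gt (hd1 _ (Ioo_subset_Icc_self hgy)))
    filter_upwards [Icc_mem_nhds hy.1 hy.2] with z hz
    exact (hginv z hz).2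
  -- Derivative of h₂ ∘ g
  set F : ℝ → ℝ := fun p => deriv h₂ p / deriv h₁ p with hF
  have hφderiv : ∀ y ∈ Ioo (0:ℝ) 1, HasDerivAt (h₂ ∘ g) (F (g y)) y := by
    intro y hy
    have := ((hdiff2 (g y)).hasDerivAt).comp y (hgderiv y hy)
    simpa [hF, div_eq_mul_inv] using this
  have hFderiv : ∀ p ∈ Ioo (0:ℝ) 1, HasDerivAt F
      ((deriv (deriv h₂) p * deriv h₁ p - deriv h₂ p * deriv (deriv h₁) p) / (deriv h₁ p) ^ 2) p :=
    fun p hp => ((hdiff2' p).hasDerivAt).div ((hdiff1' p).hasDerivAt)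
      (ne_of_gt (hd1 p (Ioo_subset_Icc_self hp)))
  constructor
  · -- index inequality → concavity
    intro H
    have hFanti : AntitoneOn F (Ioo 0 1) := by
      apply antitoneOn_of_deriv_nonpos (convex_Ioo 0 1)
      · exact (hcont2'.continuousOn).div (hcont1'.continuousOn)
          (fun p hp => ne_of_gt (hd1 p (Ioo_subset_Icc_self hp)))
      · rw [interior_Ioo]
        exact fun p hp => ((hFderiv p hp).differentiableAt).differentiableWithinAt
      · rw [interior_Ioo]
        intro p hp
        rw [(hFderiv p hp).deriv]
        have hd1p := hd1 p (Ioo_subset_Icc_self hp)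
        have hd2p := hd2 p (Ioo_subset_Icc_self hp)
        have hHp := H p hp
        rw [ge_iff_le, neg_div, neg_div, neg_le_neg_iff] at hHp
        have hnum : deriv (deriv h₂) p * deriv h₁ p ≤ deriv (deriv h₁) p * deriv h₂ p :=
          (div_le_div_iff₀ hd2p hd1p).mp hHp
        apply div_nonpos_of_nonpos_of_nonneg
        · nlinarith
        · positivity
    apply AntitoneOn.concaveOn_of_deriv (convex_Ioo 0 1)
    · intro y hy
      exact (hdiff2.continuous.continuousAt.comp (hgcont y hy)).continuousWithinAt
    · rw [interior_Ioo]
      exact fun y hy => ((hφderiv y hy).differentiableAt).differentiableWithinAt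
    · rw [interior_Ioo]
      intro a ha b hb hab
      rw [(hφderiv a ha).deriv, (hφderiv b hb).deriv]
      exact hFanti (hgIoo a ha) (hgIoo b hb)
        (hgmono.monotoneOn (Ioo_subset_Icc_self ha) (Ioo_subset_Icc_self hb) hab)
  · -- concavity → index inequality
    intro H p hp
    have hanti := H.antitoneOn_deriv (fun y hy => (hφderiv y hy).differentiableAt)
    have hFanti : AntitoneOn F (Ioo 0 1) := by
      intro a ha b hb hab
      have ha' := h1Ioo a ha
      have hb' := h1Ioo b hb
      have ea : deriv (h₂ ∘ g) (h₁ a) = F a := by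
        rw [(hφderiv _ ha').deriv, hg a (Ioo_subset_Icc_self ha)]
      have eb : deriv (h₂ ∘ g) (h₁ b) = F b := by
        rw [(hφderiv _ hb').deriv, hg b (Ioo_subset_Icc_self hb)]
      rw [← ea, ← eb]
      exact hanti ha' hb'
        (hm1.monotoneOn (Ioo_subset_Icc_self ha) (Ioo_subset_Icc_self hb) hab)
    have hle := aux_antitoneOn_deriv_nonpos hp (hFderiv p hp) hFanti
    have hd1p := hd1 p (Ioo_subset_Icc_self hp)
    have hd2p := hd2 p (Ioo_subset_Icc_self hp)
    have hnum : deriv (deriv h₂) p * deriv h₁ p - deriv h₂ p * deriv (deriv h₁) p ≤ 0 := by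
      by_contra hpos
      push_neg at hpos
      have : 0 < (deriv (deriv h₂) p * deriv h₁ p - deriv h₂ p * deriv (deriv h₁) p) /
          (deriv h₁ p) ^ 2 := div_pos hpos (by positivity)
      linarith
    rw [ge_iff_le, neg_div, neg_div, neg_le_neg_iff]
    rw [div_le_div_iff₀ hd2p hd1p]
    nlinarith
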